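/- The extreme points of the face of S₁ dual to a witness are exactly the pure product states built from its zeros: for every Ω ∈ S₁°, Set.extremePoints ℝ {ρ ∈ S₁ | Tr(Ωρ) = 0} = { (φ⊗χ)(φ⊗χ)ᴴ | φ ∈ ℂ^Na, χ ∈ ℂ^Nb, ‖φ⊗χ‖ = 1 and f_Ω(φ,χ) = 0 }. -/

import Mathlib

open Matrix
open scoped ComplexOrder

noncomputable section

namespace EW

/-- Complex square matrices indexed by `Fin Na × Fin Nb`. -/
abbrev Mat (Na Nb : ℕ) := Matrix (Fin Na × Fin Nb) (Fin Na × Fin Nb) ℂ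

/-- Kronecker product of vectors: `(φ⊗χ)_(i,j) = φ_i · χ_j`. -/
def kron {Na Nb : ℕ} (φ : Fin Na → ℂ) (χ : Fin Nb → ℂ) : Fin Na × Fin Nb → ℂ :=
  fun p => φ p.1 * χ p.2

/-- Sesquilinear pairing `xᴴ A y`. -/
def pair {n : Type*} [Fintype n] (A : Matrix n n ℂ) (x y : n → ℂ) : ℂ :=
  star x ⬝ᵥ A.mulVec y

/-- The biquadratic form `f_A(φ,χ) = (φ⊗χ)ᴴ A (φ⊗χ)`. -/
def biquad {Na Nb : ℕ} (A : Mat Na Nb) (φ : Fin Na → ℂ) (χ : Fin Nb → ℂ) : ℂ :=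
  pair A (kron φ χ) (kron φ χ)

/-- An entanglement witness: a Hermitian matrix whose biquadratic form is nonnegative. -/
def IsWitness {Na Nb : ℕ} (A : Mat Na Nb) : Prop :=
  A.IsHermitian ∧ ∀ φ χ, 0 ≤ biquad A φ χ

/-- `S₁°`, the set of trace-one entanglement witnesses. -/
def witnessSet (Na Nb : ℕ) : Set (Mat Na Nb) :=
  { Ω | IsWitness Ω ∧ Ω.trace = 1 }

/-- A zero of a witness: a pair of nonzero vectors where the biquadratic form vanishes. -/
def IsZeroOf {Na Nb : ℕ} (Ω : Mat Na Nb) (φ₀ : Fin Na → ℂ) (χ₀ : Fin Nb → ℂ) : Prop :=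
  φ₀ ≠ 0 ∧ χ₀ ≠ 0 ∧ biquad Ω φ₀ χ₀ = 0

/-- The Hessian form
`H_A(φ₀,χ₀;ξ,ζ) = Re[(ξ⊗χ₀)ᴴA(ξ⊗χ₀) + (φ₀⊗ζ)ᴴA(φ₀⊗ζ) + 2(φ₀⊗ζ)ᴴA(ξ⊗χ₀) + 2(φ₀⊗χ₀)ᴴA(ξ⊗ζ)]`. -/
def hessForm {Na Nb : ℕ} (A : Mat Na Nb) (φ₀ : Fin Na → ℂ) (χ₀ : Fin Nb → ℂ)
    (ξ : Fin Na → ℂ) (ζ : Fin Nb → ℂ) : ℝ :=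
  (pair A (kron ξ χ₀) (kron ξ χ₀) + pair A (kron φ₀ ζ) (kron φ₀ ζ)
    + 2 * pair A (kron φ₀ ζ) (kron ξ χ₀) + 2 * pair A (kron φ₀ χ₀) (kron ξ ζ)).re

/-- A Hessian zero of `Ω` at the zero `(φ₀,χ₀)`. -/
def IsHessianZeroAt {Na Nb : ℕ} (Ω : Mat Na Nb) (φ₀ : Fin Na → ℂ) (χ₀ : Fin Nb → ℂ)
    (ξ : Fin Na → ℂ) (ζ : Fin Nb → ℂ) : Prop :=
  (ξ, ζ) ≠ (0, 0) ∧ star φ₀ ⬝ᵥ ξ = 0 ∧ star χ₀ ⬝ᵥ ζ = 0 ∧ hessForm Ω φ₀ χ₀ ξ ζ = 0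

/-- A quadratic witness: a witness all of whose zeros have no Hessian zeros. -/
def IsQuadraticWitness {Na Nb : ℕ} (Ω : Mat Na Nb) : Prop :=
  IsWitness Ω ∧ ∀ φ₀ χ₀, IsZeroOf Ω φ₀ χ₀ → ∀ ξ ζ, ¬ IsHessianZeroAt Ω φ₀ χ₀ ξ ζ

/-- Partial transpose with respect to the second factor. -/
def ptrans {Na Nb : ℕ} (A : Mat Na Nb) : Mat Na Nb :=
  fun p q => A (p.1, q.2) (q.1, p.2)

/-- Euclidean norm of a complex vector. -/
def enorm {n : Type*} [Fintype n] (x : n → ℂ) : ℝ :=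
  Real.sqrt (star x ⬝ᵥ x).re

/-- Frobenius norm of a matrix. -/
def frobNorm {Na Nb : ℕ} (A : Mat Na Nb) : ℝ :=
  Real.sqrt (∑ i, ∑ j, ‖A i j‖ ^ 2)

/-- `S₁`, the set of separable states: the convex hull of normalized pure product states. -/
def sepSet (Na Nb : ℕ) : Set (Mat Na Nb) :=
  convexHull ℝ { M | ∃ (φ : Fin Na → ℂ) (χ : Fin Nb → ℂ), enorm (kron φ χ) = 1 ∧
    M = Matrix.vecMulVec (kron φ χ) (star (kron φ χ)) }

/-- `Γ` satisfies the constraint system of the witness `Ω`. -/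
def SatisfiesConstraints {Na Nb : ℕ} (Ω Γ : Mat Na Nb) : Prop :=
  (∀ φ₀ χ₀, IsZeroOf Ω φ₀ χ₀ →
    (∀ φ, pair Γ (kron φ χ₀) (kron φ₀ χ₀) = 0) ∧
    (∀ χ, pair Γ (kron φ₀ χ) (kron φ₀ χ₀) = 0)) ∧
  (∀ φ₀ χ₀, IsZeroOf Ω φ₀ χ₀ → ∀ ξ ζ, IsHessianZeroAt Ω φ₀ χ₀ ξ ζ →
    ∀ ξ' ζ', star φ₀ ⬝ᵥ ξ' = 0 → star χ₀ ⬝ᵥ ζ' = 0 →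
      hessForm Γ φ₀ χ₀ (ξ + ξ') (ζ + ζ') =
        hessForm Γ φ₀ χ₀ ξ ζ + hessForm Γ φ₀ χ₀ ξ' ζ') ∧
  (∀ φ₀ χ₀, IsZeroOf Ω φ₀ χ₀ → ∀ ξ ζ, IsHessianZeroAt Ω φ₀ χ₀ ξ ζ →
    (pair Γ (kron φ₀ ζ) (kron ξ ζ) + pair Γ (kron ξ χ₀) (kron ξ ζ)).re = 0)

end EW

namespace EWAux

variable {n : Type*} [Fintype n] [DecidableEq n]

omit [DecidableEq n] in
lemma herm_shift {A : Matrix n n ℂ} (hA : A.IsHermitian) (x y : n → ℂ) :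
    star x ⬝ᵥ A.mulVec y = star (A.mulVec x) ⬝ᵥ y := by
  rw [star_mulVec, hA.eq, ← dotProduct_mulVec]

omit [DecidableEq n] in
lemma trace_mul_vecMulVec (A : Matrix n n ℂ) (v : n → ℂ) :
    (A * Matrix.vecMulVec v (star v)).trace = star v ⬝ᵥ A.mulVec v := by
  simp only [Matrix.trace, Matrix.diag_apply, Matrix.mul_apply, Matrix.vecMulVec_apply,
    dotProduct, Matrix.mulVec, Pi.star_apply, Finset.mul_sum]
  apply Finset.sum_congr rfl; intro i _
  apply Finset.sum_congr rfl; intro j _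
  ring

omit [DecidableEq n] in
lemma trace_vecMulVec (v : n → ℂ) :
    (Matrix.vecMulVec v (star v)).trace = star v ⬝ᵥ v := by
  simp only [Matrix.trace, Matrix.diag_apply, Matrix.vecMulVec_apply, dotProduct, Pi.star_apply]
  exact Finset.sum_congr rfl fun i _ => mul_comm _ _

omit [DecidableEq n] in
lemma vecMulVec_mulVec' (v x : n → ℂ) :
    (Matrix.vecMulVec v (star v)).mulVec x = (star v ⬝ᵥ x) • v := by
  ext i
  simp only [Matrix.mulVec, Matrix.vecMulVec_apply, dotProduct, Pi.smul_apply, smul_eq_mul,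
    Pi.star_apply, mul_comm, mul_assoc, mul_left_comm]
  rw [Finset.mul_sum]

omit [DecidableEq n] in
lemma psd_vecMulVec (v : n → ℂ) : (Matrix.vecMulVec v (star v)).PosSemidef := by
  apply Matrix.PosSemidef.of_dotProduct_mulVec_nonneg
  · ext i j
    simp [Matrix.conjTranspose_apply, Matrix.vecMulVec_apply, mul_comm]
  · intro x
    rw [vecMulVec_mulVec']
    have h1 : star x ⬝ᵥ (star v ⬝ᵥ x) • v = (star v ⬝ᵥ x) * (star x ⬝ᵥ v) := by
      rw [dotProduct_smul, smul_eq_mul]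
    rw [h1, star_dotProduct v x]
    exact star_mul_self_nonneg _

/-- key rigidity: a PSD matrix killing the orthogonal complement of a unit vector is a
multiple of the rank-one projector. -/
lemma psd_fix {A : Matrix n n ℂ} (hA : A.PosSemidef) {v : n → ℂ} (hv : star v ⬝ᵥ v = 1)
    (hker : ∀ w, star v ⬝ᵥ w = 0 → A.mulVec w = 0) :
    A = A.trace • Matrix.vecMulVec v (star v) := by
  set c : ℂ := star v ⬝ᵥ A.mulVec v with hc
  have hAv : A.mulVec v = c • v := by
    set w : n → ℂ := A.mulVec v - c • v with hw
    have hvw : star v ⬝ᵥ w = 0 := by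
      simp [hw, dotProduct_sub, ← hc, hv]
    have hAw : A.mulVec w = 0 := hker w hvw
    have hwu : star w ⬝ᵥ A.mulVec v = 0 := by
      rw [herm_shift hA.1, hAw]; simp
    have hwv : star w ⬝ᵥ v = 0 := by
      rw [star_dotProduct w v, hvw, star_zero]
    have hww : star w ⬝ᵥ w = 0 := by
      have : star w ⬝ᵥ w = star w ⬝ᵥ A.mulVec v - c * (star w ⬝ᵥ v) := by
        simp [hw, dotProduct_sub, dotProduct_smul, smul_eq_mul]
      rw [this, hwu, hwv]; ring
    have hw0 : w = 0 := dotProduct_star_self_eq_zero.mp hww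
    have : A.mulVec v - c • v = 0 := by rw [← hw]; exact hw0
    exact sub_eq_zero.mp this
  have hA_eq : A = c • Matrix.vecMulVec v (star v) := by
    ext i j
    have hj : star v ⬝ᵥ Pi.single j 1 = star (v j) := by
      rw [dotProduct_single, mul_one]; rfl
    set w : n → ℂ := Pi.single j 1 - (star (v j)) • v with hwdef
    have hvw : star v ⬝ᵥ w = 0 := by
      simp [hwdef, dotProduct_sub, dotProduct_smul, hj, hv, smul_eq_mul]
    have hcol : A.mulVec (Pi.single j 1) = (star (v j)) • (c • v) := by
      have hdec : Pi.single j 1 = (star (v j)) • v + w := by simp [hwdef]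
      rw [hdec, Matrix.mulVec_add, Matrix.mulVec_smul, hAv, hker w hvw, add_zero]
    have := congrFun hcol i
    rw [Matrix.mulVec_single_one] at this
    simpa [Matrix.vecMulVec_apply, mul_comm, mul_left_comm, mul_assoc] using this
  have htr : A.trace = c := by
    rw [hA_eq, Matrix.trace_smul, trace_vecMulVec, hv, smul_eq_mul, mul_one]
  rw [htr, ← hA_eq]

omit [DecidableEq n] in
lemma norm_one_of_enorm {x : n → ℂ}
    (h : Real.sqrt (star x ⬝ᵥ x).re = 1) : star x ⬝ᵥ x = 1 := by
  have key : star x ⬝ᵥ x = ((∑ i, Complex.normSq (x i) : ℝ) : ℂ) := by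
    push_cast
    simp [dotProduct, Complex.normSq_eq_conj_mul_self]
  have hnn : (0:ℝ) ≤ ∑ i, Complex.normSq (x i) :=
    Finset.sum_nonneg fun i _ => Complex.normSq_nonneg _
  rw [key] at h ⊢
  rw [Complex.ofReal_re] at h
  have : ∑ i, Complex.normSq (x i) = 1 := by
    have := congrArg (fun r => r ^ 2) h
    simpa [Real.sq_sqrt hnn] using this
  rw [this, Complex.ofReal_one]

lemma rsmul_nonneg {a : ℝ} {z : ℂ} (ha : 0 ≤ a) (hz : 0 ≤ z) : 0 ≤ a • z := by
  rw [Complex.real_smul]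
  exact mul_nonneg (by exact_mod_cast ha) hz

lemma smul_add_eq_zero {a b : ℝ} {α β : ℂ} (ha : 0 < a) (hb : 0 < b)
    (hα : 0 ≤ α) (hβ : 0 ≤ β) (h : a • α + b • β = 0) : α = 0 ∧ β = 0 := by
  have h1 : a • α = 0 ∧ b • β = 0 := by
    rw [← add_eq_zero_iff_of_nonneg (rsmul_nonneg ha.le hα) (rsmul_nonneg hb.le hβ)]
    exact h
  constructor
  · have := h1.1
    rw [Complex.real_smul, mul_eq_zero] at this
    rcases this with h' | h'
    · exact absurd h' (by exact_mod_cast ha.ne')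
    · exact h'
  · have := h1.2
    rw [Complex.real_smul, mul_eq_zero] at this
    rcases this with h' | h'
    · exact absurd h' (by exact_mod_cast hb.ne')
    · exact h'

end EWAux

open EW EWAux

section Main

variable {Na Nb : ℕ}

lemma psd_rsmul {n : Type*} [Fintype n] {A : Matrix n n ℂ} (hA : A.PosSemidef)
    {a : ℝ} (ha : 0 ≤ a) : (a • A).PosSemidef := by
  apply Matrix.PosSemidef.of_dotProduct_mulVec_nonneg
  · show (a • A)ᴴ = a • A
    rw [Matrix.conjTranspose_smul, star_trivial, hA.1.eq]
  · intro x
    rw [Matrix.smul_mulVec, dotProduct_smul]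
    exact rsmul_nonneg ha (hA.dotProduct_mulVec_nonneg x)

lemma unit_of_enorm {n : Type*} [Fintype n] {x : n → ℂ} (h : EW.enorm x = 1) :
    star x ⬝ᵥ x = 1 :=
  norm_one_of_enorm (by simpa [EW.enorm] using h)

lemma sep_props {ρ : Mat Na Nb} (h : ρ ∈ sepSet Na Nb) : ρ.PosSemidef ∧ ρ.trace = 1 := by
  have hsub : { M : Mat Na Nb | ∃ (φ : Fin Na → ℂ) (χ : Fin Nb → ℂ), EW.enorm (kron φ χ) = 1 ∧
      M = Matrix.vecMulVec (kron φ χ) (star (kron φ χ)) } ⊆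
      {M : Mat Na Nb | M.PosSemidef ∧ M.trace = 1} := by
    rintro M ⟨φ, χ, hn, rfl⟩
    exact ⟨psd_vecMulVec _, by rw [EWAux.trace_vecMulVec, unit_of_enorm hn]⟩
  have hconv : Convex ℝ {M : Mat Na Nb | M.PosSemidef ∧ M.trace = 1} := by
    rintro A ⟨hA, htA⟩ B ⟨hB, htB⟩ a b ha hb hab
    refine ⟨(psd_rsmul hA ha).add (psd_rsmul hB hb), ?_⟩
    rw [Matrix.trace_add, Matrix.trace_smul, Matrix.trace_smul, htA, htB,
      Complex.real_smul, Complex.real_smul, mul_one, mul_one, ← Complex.ofReal_add, hab,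
      Complex.ofReal_one]
  exact convexHull_min hsub hconv h

lemma trace_mul_prod (A : Mat Na Nb) (φ : Fin Na → ℂ) (χ : Fin Nb → ℂ) :
    (A * Matrix.vecMulVec (kron φ χ) (star (kron φ χ))).trace = biquad A φ χ :=
  trace_mul_vecMulVec A (kron φ χ)

/-- The dual face of a witness is the convex hull of its zero product states. -/
lemma face_eq {Ω : Mat Na Nb} (hΩ : Ω ∈ witnessSet Na Nb) :
    {ρ ∈ sepSet Na Nb | (Ω * ρ).trace = 0} =
    convexHull ℝ { M : Mat Na Nb | ∃ (φ : Fin Na → ℂ) (χ : Fin Nb → ℂ),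
        EW.enorm (kron φ χ) = 1 ∧ biquad Ω φ χ = 0 ∧
        M = Matrix.vecMulVec (kron φ χ) (star (kron φ χ)) } := by
  apply Set.Subset.antisymm
  · rintro ρ ⟨hsep, htr⟩
    rw [sepSet, convexHull_eq] at hsep
    obtain ⟨ι, t, w, z, hw0, hw1, hz, hcm⟩ := hsep
    have hterm : ∀ i ∈ t, (0:ℂ) ≤ w i • (Ω * z i).trace := by
      intro i hi
      obtain ⟨φ, χ, hn, hzi⟩ := hz i hi
      refine rsmul_nonneg (hw0 i hi) ?_
      rw [hzi, trace_mul_prod]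
      exact hΩ.1.2 φ χ
    have hsum : ∑ i ∈ t, w i • (Ω * z i).trace = 0 := by
      rw [← htr, ← hcm, Finset.centerMass_eq_of_sum_1 _ _ hw1, Matrix.mul_sum,
        Matrix.trace_sum]
      exact Finset.sum_congr rfl fun i _ => by rw [Matrix.mul_smul, Matrix.trace_smul]
    have hzero : ∀ i ∈ t, w i • (Ω * z i).trace = 0 :=
      (Finset.sum_eq_zero_iff_of_nonneg hterm).mp hsum
    have hmem : ∀ i ∈ {i ∈ t | w i ≠ 0}, z i ∈
        { M : Mat Na Nb | ∃ (φ : Fin Na → ℂ) (χ : Fin Nb → ℂ),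
          EW.enorm (kron φ χ) = 1 ∧ biquad Ω φ χ = 0 ∧
          M = Matrix.vecMulVec (kron φ χ) (star (kron φ χ)) } := by
      intro i hi
      rw [Finset.mem_filter] at hi
      obtain ⟨φ, χ, hn, hzi⟩ := hz i hi.1
      refine ⟨φ, χ, hn, ?_, hzi⟩
      have := hzero i hi.1
      rw [Complex.real_smul, mul_eq_zero] at this
      rcases this with h' | h'
      · exact absurd h' (by exact_mod_cast hi.2)
      · rw [← trace_mul_prod Ω φ χ, ← hzi]; exact h'
    have hρ : ρ = {i ∈ t | w i ≠ 0}.centerMass w z := by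
      rw [Finset.centerMass_filter_ne_zero, hcm]
    rw [hρ]
    apply Finset.centerMass_mem_convexHull _ (fun i hi => hw0 i (Finset.mem_filter.mp hi).1)
      _ hmem
    rw [Finset.sum_filter_ne_zero, hw1]
    exact one_pos
  · apply convexHull_min
    · rintro M ⟨φ, χ, hn, hb0, rfl⟩
      refine ⟨subset_convexHull ℝ _ ⟨φ, χ, hn, rfl⟩, ?_⟩
      rw [trace_mul_prod, hb0]
    · rintro A ⟨hA1, hA2⟩ B ⟨hB1, hB2⟩ a b ha hb hab
      refine ⟨convex_convexHull ℝ _ hA1 hB1 ha hb hab, ?_⟩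
      rw [Matrix.mul_add, Matrix.mul_smul, Matrix.mul_smul, Matrix.trace_add,
        Matrix.trace_smul, Matrix.trace_smul, hA2, hB2, smul_zero, smul_zero, add_zero]

/-- A unit pure state is extreme in any set of states containing it. -/
lemma pure_extreme_in {v : Fin Na × Fin Nb → ℂ} (hv : star v ⬝ᵥ v = 1)
    {F : Set (Mat Na Nb)} (hF : ∀ ρ ∈ F, ρ.PosSemidef ∧ ρ.trace = 1)
    (hmem : Matrix.vecMulVec v (star v) ∈ F) :
    Matrix.vecMulVec v (star v) ∈ Set.extremePoints ℝ F := by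
  refine mem_extremePoints.2 ⟨hmem, ?_⟩
  intro x₁ hx₁ x₂ hx₂ hseg
  obtain ⟨a, b, ha, hb, hab, habeq⟩ := hseg
  obtain ⟨hP1, hT1⟩ := hF _ hx₁
  obtain ⟨hP2, hT2⟩ := hF _ hx₂
  have key : ∀ x : Mat Na Nb, x.PosSemidef → x.trace = 1 →
      (∀ w, star v ⬝ᵥ w = 0 → x.mulVec w = 0) → x = Matrix.vecMulVec v (star v) := by
    intro x hx ht hker
    have := psd_fix hx hv hker
    rwa [ht, one_smul] at this
  have hker : ∀ w, star v ⬝ᵥ w = 0 → x₁.mulVec w = 0 ∧ x₂.mulVec w = 0 := by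
    intro w hw
    have hM : star w ⬝ᵥ (Matrix.vecMulVec v (star v)).mulVec w = 0 := by
      rw [vecMulVec_mulVec', hw, zero_smul, dotProduct_zero]
    have hsum : a • (star w ⬝ᵥ x₁.mulVec w) + b • (star w ⬝ᵥ x₂.mulVec w) = 0 := by
      rw [← hM, ← habeq, Matrix.add_mulVec, Matrix.smul_mulVec,
        Matrix.smul_mulVec, dotProduct_add, dotProduct_smul, dotProduct_smul]
    obtain ⟨h1, h2⟩ := smul_add_eq_zero ha hb (hP1.dotProduct_mulVec_nonneg w) (hP2.dotProduct_mulVec_nonneg w) hsum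
    exact ⟨(hP1.dotProduct_mulVec_zero_iff w).mp h1, (hP2.dotProduct_mulVec_zero_iff w).mp h2⟩
  exact ⟨key x₁ hP1 hT1 (fun w hw => (hker w hw).1),
    key x₂ hP2 hT2 (fun w hw => (hker w hw).2)⟩

end Main

open EW
theorem extreme_points_of_dual_face (Na Nb : ℕ) (Ω : Mat Na Nb)
    (hΩ : Ω ∈ witnessSet Na Nb) :
    Set.extremePoints ℝ {ρ ∈ sepSet Na Nb | (Ω * ρ).trace = 0} =
    { M : Mat Na Nb | ∃ (φ : Fin Na → ℂ) (χ : Fin Nb → ℂ),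
        EW.enorm (kron φ χ) = 1 ∧ biquad Ω φ χ = 0 ∧
        M = Matrix.vecMulVec (kron φ χ) (star (kron φ χ)) } := by
  apply Set.Subset.antisymm
  · rw [face_eq hΩ]
    exact extremePoints_convexHull_subset
  · rintro M ⟨φ, χ, hn, hb0, rfl⟩
    apply pure_extreme_in (unit_of_enorm hn) (fun ρ hρ => sep_props hρ.1)
    exact ⟨subset_convexHull ℝ _ ⟨φ, χ, hn, rfl⟩, by rw [trace_mul_prod, hb0]⟩
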